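/- For every integer m ≥ 1, if r ≥ 1 and n_1 > n_2 > ⋯ > n_r > 0 are integers with n_1 = 2m, and |(−1)^r + 2·Σ_{i=1}^{r} (−1)^{i−1+n_i}| = 4m+1, then r = 2m and n_i = 2m+1−i for every i ∈ {1,…,r}. -/

import Mathlib

/-- Combinatorial step in the proof of Theorem 1.3 (case `n = 4m+1`): if `m ≥ 1`, `r ≥ 1`,
`n 1 > n 2 > ⋯ > n r > 0` are integers with `n 1 = 2m`, and
`|(−1)^r + 2·Σ_{i=1}^{r} (−1)^{i−1+nᵢ}| = 4m+1`, then `r = 2m` and `nᵢ = 2m+1−i` for all `i`. -/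
theorem stmt_10 (m : ℕ) (hm : 1 ≤ m) (r : ℕ) (hr : 1 ≤ r) (n : ℕ → ℕ)
    (hpos : ∀ i, 1 ≤ i → i ≤ r → 0 < n i)
    (hdec : ∀ i j, 1 ≤ i → i < j → j ≤ r → n j < n i)
    (hn1 : n 1 = 2 * m)
    (hdet : |(-1 : ℤ) ^ r + 2 * ∑ i ∈ Finset.Icc 1 r, (-1 : ℤ) ^ (i - 1 + n i)| =
      4 * (m : ℤ) + 1) :
    r = 2 * m ∧ ∀ i, 1 ≤ i → i ≤ r → n i = 2 * m + 1 - i := by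
  -- strict decrease gives the chain inequality
  have hchain : ∀ d i, 1 ≤ i → i + d ≤ r → n (i + d) + d ≤ n i := by
    intro d
    induction d with
    | zero => intro i _ _; simp
    | succ d ih =>
      intro i hi hir
      have h1 := ih i hi (by omega)
      have h2 := hdec (i + d) (i + d + 1) (by omega) (by omega) (by omega)
      show n (i + d + 1) + (d + 1) ≤ n i
      omega
  -- r ≤ 2m
  have hrle : r ≤ 2 * m := by
    have h1 := hchain (r - 1) 1 le_rfl (by omega)
    have h2 := hpos r hr le_rfl
    rw [show 1 + (r - 1) = r by omega] at h1
    omega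
  -- bound on the sum
  have habs : |∑ i ∈ Finset.Icc 1 r, (-1 : ℤ) ^ (i - 1 + n i)| ≤ (r : ℤ) := by
    calc |∑ i ∈ Finset.Icc 1 r, (-1 : ℤ) ^ (i - 1 + n i)|
        ≤ ∑ i ∈ Finset.Icc 1 r, |(-1 : ℤ) ^ (i - 1 + n i)| :=
          Finset.abs_sum_le_sum_abs _ _
      _ = ∑ _i ∈ Finset.Icc 1 r, (1 : ℤ) := by
          apply Finset.sum_congr rfl
          intro i _
          rw [abs_pow, abs_neg, abs_one, one_pow]
      _ = r := by simp [Nat.card_Icc]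
  have hbound : (4 : ℤ) * m + 1 ≤ 1 + 2 * r := by
    calc (4 : ℤ) * m + 1 = |(-1 : ℤ) ^ r + 2 * ∑ i ∈ Finset.Icc 1 r,
            (-1 : ℤ) ^ (i - 1 + n i)| := hdet.symm
      _ ≤ |(-1 : ℤ) ^ r| + |2 * ∑ i ∈ Finset.Icc 1 r, (-1 : ℤ) ^ (i - 1 + n i)| :=
          abs_add_le _ _
      _ = 1 + 2 * |∑ i ∈ Finset.Icc 1 r, (-1 : ℤ) ^ (i - 1 + n i)| := by
          rw [abs_pow, abs_neg, abs_one, one_pow, abs_mul]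
          norm_num
      _ ≤ 1 + 2 * r := by linarith
  have hrge : 2 * m ≤ r := by
    have : (2 : ℤ) * m ≤ r := by linarith
    exact_mod_cast this
  have hreq : r = 2 * m := le_antisymm hrle hrge
  refine ⟨hreq, ?_⟩
  intro i hi hir
  have hup := hchain (i - 1) 1 le_rfl (by omega)
  rw [show 1 + (i - 1) = i by omega] at hup
  have hlo := hchain (r - i) i hi (by omega)
  rw [show i + (r - i) = r by omega] at hlo
  have := hpos r hr le_rfl
  omega
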